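/- Let a < 0 be a real number, let X > 1 be a real number, and let n be a positive integer. Then ∫_{−log X}^{0} e^{−ax} · [∑_{l=1}^{n} binom(n, l) (1 − 2a)^{l} x^{l−1}/(l−1)!] dx = 1 − (1 − (2a − 1)/a)^{n} + ∑_{l=1}^{n} binom(n, l) (2a − 1)^{l} X^{a} ∑_{k=0}^{l−1} (log X)^{k}/(k! (−a)^{l−k}). -/

import Mathlib

lemma key_alg (a : ℝ) (ha : a ≠ 0) (m : ℕ) (x : ℝ) :
    a * ∑ k ∈ Finset.range (m+1), x^k / (k.factorial * a^(m+1-k))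
      - ∑ k ∈ Finset.range (m+1), (k:ℝ) * x^(k-1) / (k.factorial * a^(m+1-k))
      = x^m / m.factorial := by
  rw [Finset.mul_sum,
      Finset.sum_range_succ (fun k => a * (x^k / ((k.factorial : ℝ) * a^(m+1-k)))),
      Finset.sum_range_succ' (fun k => (k:ℝ) * x^(k-1) / ((k.factorial : ℝ) * a^(m+1-k)))]
  simp only [Nat.cast_zero, zero_mul, zero_div, add_zero, Nat.sub_self,
    Nat.add_sub_cancel_left, Nat.add_sub_cancel]
  have h1 : ∀ k ∈ Finset.range m,
      a * (x^k / ((k.factorial : ℝ) * a^(m+1-k)))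
        = ((k:ℝ)+1) * x^(k+1-1) / (((k+1).factorial : ℝ) * a^(m+1-(k+1))) := by
    intro k hk
    have hk' : k < m := Finset.mem_range.mp hk
    have h2 : m + 1 - k = (m - k) + 1 := by omega
    have h3 : m + 1 - (k + 1) = m - k := by omega
    rw [h2, h3, pow_succ, Nat.factorial_succ]
    push_cast
    field_simp
  rw [Finset.sum_congr rfl h1]
  simp only [Nat.add_sub_cancel, Nat.cast_add, Nat.cast_one]
  rw [add_sub_cancel_left, pow_one]
  field_simp

lemma hasDerivAt_F (a : ℝ) (ha : a ≠ 0) (m : ℕ) (x : ℝ) :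
    HasDerivAt (fun y => -Real.exp (-a*y) * ∑ k ∈ Finset.range (m+1),
      y^k / ((k.factorial : ℝ) * a^(m+1-k)))
      (Real.exp (-a*x) * x^m / m.factorial) x := by
  have he : HasDerivAt (fun y : ℝ => Real.exp (-a*y)) (-a * Real.exp (-a*x)) x := by
    have h1 : HasDerivAt (fun y : ℝ => -a * y) (-a) x := by
      simpa using (hasDerivAt_id x).const_mul (-a)
    simpa [mul_comm] using h1.exp
  have hs : HasDerivAt (fun y : ℝ => ∑ k ∈ Finset.range (m+1),
      y^k / ((k.factorial : ℝ) * a^(m+1-k)))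
      (∑ k ∈ Finset.range (m+1), (k:ℝ) * x^(k-1) / ((k.factorial : ℝ) * a^(m+1-k))) x := by
    apply HasDerivAt.fun_sum
    intro k _
    simpa [div_eq_mul_inv] using
      (hasDerivAt_pow k x).mul_const (((k.factorial : ℝ) * a^(m+1-k))⁻¹)
  have h := he.fun_neg.fun_mul hs
  refine h.congr_deriv (Eq.symm ?_)
  have := key_alg a ha m x
  have hmul := congrArg (fun t => Real.exp (-a*x) * t) this
  simp only [mul_sub] at hmul
  rw [mul_div_assoc, ← hmul]
  ring

lemma integral_exp_pow (a : ℝ) (ha : a ≠ 0) (m : ℕ) (b : ℝ) :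
    ∫ x in b..(0:ℝ), Real.exp (-a*x) * x^m / m.factorial
      = -(1 / a^(m+1)) + Real.exp (-a*b) * ∑ k ∈ Finset.range (m+1),
          b^k / ((k.factorial : ℝ) * a^(m+1-k)) := by
  rw [intervalIntegral.integral_eq_sub_of_hasDerivAt
      (fun x _ => hasDerivAt_F a ha m x)
      ((Continuous.intervalIntegrable (by fun_prop) _ _))]
  simp [Finset.sum_range_succ', zero_pow, Nat.add_sub_cancel]

lemma binom_sum (n : ℕ) (r : ℝ) :
    ∑ l ∈ Finset.Icc 1 n, (n.choose l : ℝ) * r ^ l = (1 + r)^n - 1 := by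
  have h : Finset.range (n+1) = insert 0 (Finset.Icc 1 n) := by
    ext k; simp [Finset.mem_range, Finset.mem_Icc]; omega
  have hb := add_pow r 1 n
  simp only [one_pow, mul_one] at hb
  rw [h, Finset.sum_insert (by simp)] at hb
  simp only [pow_zero, one_mul, Nat.choose_zero_right, Nat.cast_one] at hb
  have : (1 + r)^n = (r + 1)^n := by ring
  rw [this, hb]
  have : ∀ l ∈ Finset.Icc 1 n, (n.choose l : ℝ) * r ^ l = r ^ l * (n.choose l : ℝ) := by
    intros; ring
  rw [Finset.sum_congr rfl this]
  ring

/-- Evaluation of the truncated transform `H_{n,X}(0)`. -/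
theorem truncated_transform_at_zero (a : ℝ) (ha : a < 0) (X : ℝ) (hX : 1 < X)
    (n : ℕ) (hn : 0 < n) :
    ∫ x in (-Real.log X)..(0 : ℝ), Real.exp (-a * x) *
        ∑ l ∈ Finset.Icc 1 n, (n.choose l : ℝ) * (1 - 2 * a) ^ l * x ^ (l - 1) /
          (Nat.factorial (l - 1) : ℝ) =
      1 - (1 - (2 * a - 1) / a) ^ n +
        ∑ l ∈ Finset.Icc 1 n, (n.choose l : ℝ) * (2 * a - 1) ^ l * X ^ a *
          ∑ k ∈ Finset.range l,
            (Real.log X) ^ k / ((Nat.factorial k : ℝ) * (-a) ^ (l - k)) := by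
  have ha0 : a ≠ 0 := ne_of_lt ha
  set L := Real.log X with hL
  have hXa : Real.exp (-a * -L) = X ^ a := by
    rw [Real.rpow_def_of_pos (lt_trans one_pos hX)]
    ring_nf
    rfl
  have hinteg : ∀ x : ℝ, Real.exp (-a * x) *
        ∑ l ∈ Finset.Icc 1 n, (n.choose l : ℝ) * (1 - 2 * a) ^ l * x ^ (l - 1) /
          (Nat.factorial (l - 1) : ℝ)
      = ∑ l ∈ Finset.Icc 1 n, (n.choose l : ℝ) * (1 - 2 * a) ^ l *
          (Real.exp (-a * x) * x ^ (l - 1) / (Nat.factorial (l - 1) : ℝ)) := by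
    intro x
    rw [Finset.mul_sum]
    refine Finset.sum_congr rfl fun l _ => by ring
  simp only [hinteg]
  rw [intervalIntegral.integral_finset_sum
      (fun l _ => (Continuous.intervalIntegrable (by fun_prop) _ _))]
  have hterm : ∀ l ∈ Finset.Icc 1 n,
      (∫ x in (-L)..(0:ℝ), (n.choose l : ℝ) * (1 - 2 * a) ^ l *
          (Real.exp (-a * x) * x ^ (l - 1) / (Nat.factorial (l - 1) : ℝ)))
        = (n.choose l : ℝ) * (-((1 - 2*a)/a) ^ l)
          + (n.choose l : ℝ) * (2 * a - 1) ^ l * X ^ a *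
            ∑ k ∈ Finset.range l, L ^ k / ((Nat.factorial k : ℝ) * (-a) ^ (l - k)) := by
    intro l hl
    obtain ⟨hl1, hln⟩ := Finset.mem_Icc.mp hl
    obtain ⟨m, rfl⟩ : ∃ m, l = m + 1 := ⟨l - 1, by omega⟩
    simp only [Nat.add_sub_cancel]
    rw [intervalIntegral.integral_const_mul, integral_exp_pow a ha0 m (-L)]
    simp only [Nat.add_sub_cancel, hXa]
    rw [mul_add]
    congr 1
    · rw [div_pow]
      ring
    · have hsum : ∑ k ∈ Finset.range (m+1), (-L) ^ k / ((Nat.factorial k : ℝ) * a ^ (m+1-k))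
          = ∑ k ∈ Finset.range (m+1),
              ((-1:ℝ)) ^ (m+1) * (L ^ k / ((Nat.factorial k : ℝ) * (-a) ^ (m+1-k))) := by
        refine Finset.sum_congr rfl fun k hk => ?_
        have hkm : k ≤ m + 1 := le_of_lt (Finset.mem_range.mp hk) |>.trans (by omega)
        have hkk : (m + 1 - k) + k = m + 1 := by omega
        have hfac : ((Nat.factorial k : ℝ)) ≠ 0 := by positivity
        have hane' : (a : ℝ) ^ (m+1-k) ≠ 0 := pow_ne_zero _ ha0
        rw [neg_pow L, neg_pow a,
          show ((-1:ℝ))^(m+1) = (-1)^(m+1-k) * (-1)^k from by rw [← pow_add, hkk]]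
        have hcne : ((-1:ℝ))^(m+1-k) ≠ 0 := pow_ne_zero _ (by norm_num)
        field_simp
      have hpow : (1 - 2*a)^(m+1) * ((-1:ℝ))^(m+1) = (2*a-1)^(m+1) := by
        rw [← mul_pow]; congr 1; ring
      rw [hsum, ← Finset.mul_sum, ← hpow]
      ring
  rw [Finset.sum_congr rfl hterm, Finset.sum_add_distrib]
  congr 1
  have : ∀ l ∈ Finset.Icc 1 n, (n.choose l : ℝ) * (-((1 - 2*a)/a) ^ l)
      = -((n.choose l : ℝ) * ((1 - 2*a)/a) ^ l) := fun l _ => by ring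
  rw [Finset.sum_congr rfl this, Finset.sum_neg_distrib, binom_sum]
  have h2 : 1 + (1 - 2*a)/a = 1 - (2*a-1)/a := by ring
  rw [h2]
  ring
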